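/- Let μ be a soft-median of q under p at temperature λ and define π*(a) = (1 + ε·tanh((q(a) − μ)/(2λ)))·p(a). Then π* is a probability vector (π*(a) > 0 and ∑_{a∈A} π*(a) = 1) and its total variation distance to p satisfies ∑_{a∈A} |π*(a) − p(a)| < ε. -/
import Mathlib

lemma abs_tanh_lt_one (x : ℝ) : |Real.tanh x| < 1 := by
  have hc : 0 < Real.cosh x := Real.cosh_pos x
  rw [Real.tanh_eq_sinh_div_cosh, abs_div, abs_of_pos hc, div_lt_one hc, abs_lt]
  constructor
  · have := Real.sinh_lt_cosh (-x)
    rw [Real.sinh_neg, Real.cosh_neg] at this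
    linarith
  · exact Real.sinh_lt_cosh x

theorem stmt8 {A : Type*} [Fintype A] [Nonempty A]
    (p : A → ℝ) (hp : ∀ a, 0 < p a) (hpsum : ∑ a, p a = 1)
    (q : A → ℝ) (lam : ℝ) (hlam : 0 < lam)
    (ε : ℝ) (hε : ε ∈ Set.Ioo (0 : ℝ) 1)
    (μ : ℝ) (hμ : ∑ a, p a * Real.tanh ((q a - μ) / (2 * lam)) = 0)
    (πstar : A → ℝ)
    (hπ : ∀ a, πstar a = (1 + ε * Real.tanh ((q a - μ) / (2 * lam))) * p a) :
    (∀ a, 0 < πstar a) ∧ (∑ a, πstar a = 1) ∧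
    ∑ a, |πstar a - p a| < ε := by
  obtain ⟨hε0, hε1⟩ := hε
  have htb : ∀ a, |Real.tanh ((q a - μ) / (2 * lam))| < 1 := fun a => abs_tanh_lt_one _
  refine ⟨fun a => ?_, ?_, ?_⟩
  · rw [hπ a]
    have := (abs_lt.1 (htb a)).1
    have h1 : |ε * Real.tanh ((q a - μ) / (2 * lam))| < 1 := by
      rw [abs_mul, abs_of_pos hε0]
      calc ε * |Real.tanh ((q a - μ) / (2 * lam))| ≤ ε * 1 :=
            mul_le_mul_of_nonneg_left (le_of_lt (htb a)) hε0.le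
        _ < 1 := by linarith
    have := (abs_lt.1 h1).1
    have := hp a
    nlinarith
  · have : ∑ a, πstar a = ∑ a, (p a + ε * (p a * Real.tanh ((q a - μ) / (2 * lam)))) := by
      apply Finset.sum_congr rfl; intro a _; rw [hπ a]; ring
    rw [this, Finset.sum_add_distrib, ← Finset.mul_sum, hμ, hpsum]; ring
  · have hlt : ∀ a, |πstar a - p a| < ε * p a := by
      intro a
      rw [hπ a]
      have h : (1 + ε * Real.tanh ((q a - μ) / (2 * lam))) * p a - p a
          = ε * Real.tanh ((q a - μ) / (2 * lam)) * p a := by ring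
      rw [h, abs_mul, abs_mul, abs_of_pos hε0, abs_of_pos (hp a)]
      have h2 := mul_pos (mul_pos hε0 (hp a)) (sub_pos.2 (htb a))
      nlinarith [h2]
    calc ∑ a, |πstar a - p a| < ∑ a, ε * p a :=
          Finset.sum_lt_sum_of_nonempty Finset.univ_nonempty (fun a _ => hlt a)
      _ = ε := by rw [← Finset.mul_sum, hpsum, mul_one]
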